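/- Let A_1, A_2, …, A_n be n×n nonnegative matrices, each with strictly positive diagonal entries, such that for each k the directed graph with edge set {(i,j) : A_k(i,j) > 0} is strongly connected. Then the product A_1 A_2 ⋯ A_n is entrywise strictly positive. -/

import Mathlib

open Matrix Finset

private noncomputable def rowSupp {n : ℕ} (M : Matrix (Fin n) (Fin n) ℝ) (i : Fin n) :
    Finset (Fin n) := univ.filter (fun j => 0 < M i j)

private lemma crossing {n : ℕ} {r : Fin n → Fin n → Prop} {S : Finset (Fin n)}
    {u j : Fin n} (hu : u ∈ S) (h : Relation.TransGen r u j) :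
    j ∉ S → ∃ k ∈ S, ∃ l, l ∉ S ∧ r k l := by
  induction h with
  | single h' => exact fun hj => ⟨u, hu, _, hj, h'⟩
  | @tail b c hab hbc ih =>
    intro hj
    by_cases hb : b ∈ S
    · exact ⟨b, hb, c, hj, hbc⟩
    · exact ih hb

private lemma entry_pos {n : ℕ} {M B : Matrix (Fin n) (Fin n) ℝ}
    {i k j : Fin n} (hM : ∀ k, 0 ≤ M i k) (hB : ∀ i j, 0 ≤ B i j)
    (h1 : 0 < M i k) (h2 : 0 < B k j) : 0 < (M * B) i j := by
  rw [Matrix.mul_apply]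
  exact Finset.sum_pos' (fun x _ => mul_nonneg (hM x) (hB x j))
    ⟨k, mem_univ k, mul_pos h1 h2⟩

private lemma main_lemma {n : ℕ} (hn : 0 < n) (L : List (Matrix (Fin n) (Fin n) ℝ))
    (hL : ∀ B ∈ L, (∀ i j, 0 ≤ B i j) ∧ (∀ i, 0 < B i i) ∧
      (∀ i j, i ≠ j → Relation.TransGen (fun u v => 0 < B u v) i j)) (i : Fin n) :
    (∀ j, 0 ≤ L.prod i j) ∧ min (L.length + 1) n ≤ (rowSupp L.prod i).card := by
  induction L using List.reverseRecOn with
  | nil =>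
    constructor
    · intro j
      simp only [List.prod_nil, Matrix.one_apply]
      split <;> norm_num
    · have hi : i ∈ rowSupp (1 : Matrix (Fin n) (Fin n) ℝ) i := by
        exact Finset.mem_filter.mpr ⟨mem_univ i, by simp⟩
      simp only [List.prod_nil, List.length_nil]
      have : 0 < (rowSupp (1 : Matrix (Fin n) (Fin n) ℝ) i).card :=
        Finset.card_pos.mpr ⟨i, hi⟩
      omega
  | append_singleton L B ih =>
    have hB := hL B (by simp)
    obtain ⟨hBn, hBd, hBc⟩ := hB
    have := ih (fun C hC => hL C (by simp [hC]))
    obtain ⟨hMn, hcard⟩ := this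
    rw [List.prod_append, List.prod_cons, List.prod_nil, mul_one]
    set M := L.prod with hMdef
    have hnonneg : ∀ j, 0 ≤ (M * B) i j := by
      intro j
      rw [Matrix.mul_apply]
      exact Finset.sum_nonneg fun x _ => mul_nonneg (hMn x) (hBn x j)
    refine ⟨hnonneg, ?_⟩
    have hsub : rowSupp M i ⊆ rowSupp (M * B) i := by
      intro j hj
      simp only [rowSupp, mem_filter, mem_univ, true_and] at hj ⊢
      exact entry_pos hMn hBn hj (hBd j)
    by_cases huniv : rowSupp M i = univ
    · have : rowSupp (M * B) i = univ :=
        Finset.univ_subset_iff.mp (huniv ▸ hsub)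
      rw [this]
      simp [Finset.card_univ]
    · have hlt : (rowSupp M i).card < n := by
        have := Finset.card_lt_card (Finset.ssubset_univ_iff.mpr huniv)
        simpa using this
      have hne : (rowSupp M i).Nonempty := by
        apply Finset.card_pos.mp
        omega
      obtain ⟨u, hu⟩ := hne
      obtain ⟨j0, hj0⟩ : ∃ j0, j0 ∉ rowSupp M i := by
        by_contra hc
        push_neg at hc
        exact huniv (Finset.eq_univ_of_forall hc)
      have huj : u ≠ j0 := fun h => hj0 (h ▸ hu)
      obtain ⟨k, hk, l, hl, hkl⟩ := crossing hu (hBc u j0 huj) hj0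
      have hkpos : 0 < M i k := by
        simpa [rowSupp] using hk
      have hlnew : l ∈ rowSupp (M * B) i := by
        simp only [rowSupp, mem_filter, mem_univ, true_and]
        exact entry_pos hMn hBn hkpos hkl
      have hins : insert l (rowSupp M i) ⊆ rowSupp (M * B) i :=
        Finset.insert_subset hlnew hsub
      have hcard2 : (rowSupp M i).card + 1 ≤ (rowSupp (M * B) i).card := by
        have := Finset.card_le_card hins
        rwa [Finset.card_insert_of_notMem hl] at this
      simp only [List.length_append, List.length_cons, List.length_nil]
      omega

theorem product_strongly_connected_positive
    {n : ℕ} (hn : 0 < n)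
    (A : Fin n → Matrix (Fin n) (Fin n) ℝ)
    (hnonneg : ∀ k i j, 0 ≤ A k i j)
    (hdiag : ∀ k i, 0 < A k i i)
    (hconn : ∀ k, ∀ i j : Fin n, i ≠ j → Relation.TransGen (fun u v => 0 < A k u v) i j) :
    ∀ i j, 0 < (((List.finRange n).map A).prod) i j := by
  intro i j
  have h := main_lemma hn ((List.finRange n).map A) ?_ i
  · obtain ⟨_, hcard⟩ := h
    simp only [List.length_map, List.length_finRange] at hcard
    have hmin : min (n + 1) n = n := by omega
    rw [hmin] at hcard
    have hle : (rowSupp ((List.finRange n).map A).prod i).card ≤ n := by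
      have := Finset.card_le_univ (rowSupp ((List.finRange n).map A).prod i)
      simpa using this
    have huniv : rowSupp ((List.finRange n).map A).prod i = univ := by
      apply Finset.eq_univ_of_card
      simp only [Fintype.card_fin]
      omega
    have : j ∈ rowSupp ((List.finRange n).map A).prod i := huniv ▸ mem_univ j
    simpa [rowSupp] using this
  · intro B hB
    obtain ⟨k, _, rfl⟩ := List.mem_map.mp hB
    exact ⟨hnonneg k, hdiag k, hconn k⟩
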